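/- Let Σ ⊂ ℂ³ be the irreducible surface defined by f, and suppose that for every regular point y of Σ the gradient ∇f(y) is parallel to y (i.e. every point of Σ is 'perpendicular to the origin'). If Σ is not normal-isotropic (i.e. the hodograph h = f₁²+f₂²+f₃² does not vanish identically on Σ), then Σ is a sphere centered at the origin: there exists c ∈ ℂ^× such that y₁²+y₂²+y₃² = c on Σ. -/

import Mathlib

open MvPolynomial

namespace Sphere15

/-- coefficient formula for pderiv -/
lemma coeff_pderiv (i : Fin 3) (p : MvPolynomial (Fin 3) ℂ) (m : Fin 3 →₀ ℕ) :
    coeff m (pderiv i p) = ((m i : ℂ) + 1) * coeff (m + Finsupp.single i 1) p := by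
  induction p using MvPolynomial.induction_on' with
  | add p q hp hq => simp [hp, hq, mul_add]
  | monomial s a =>
    rw [pderiv_monomial, coeff_monomial, coeff_monomial]
    by_cases h : s = m + Finsupp.single i 1
    · have h1 : s - Finsupp.single i 1 = m := by
        rw [h]; exact add_tsub_cancel_right _ _
      have h2 : s i = m i + 1 := by simp [h]
      rw [if_pos h1, if_pos h, h2]
      push_cast; ring
    · rw [if_neg h]
      by_cases h1 : s - Finsupp.single i 1 = m
      · by_cases h2 : s i = 0
        · rw [if_pos h1, h2]; simp
        · exfalso; apply h
          rw [← h1, tsub_add_cancel_of_le]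
          rwa [Finsupp.single_le_iff, Nat.one_le_iff_ne_zero]
      · rw [if_neg h1, mul_zero]

lemma eq_C_of_pderiv_eq_zero {p : MvPolynomial (Fin 3) ℂ}
    (h : ∀ i, pderiv i p = 0) : ∃ a : ℂ, p = C a := by
  refine ⟨coeff 0 p, ?_⟩
  ext m
  rw [coeff_C]
  by_cases hm : (0 : Fin 3 →₀ ℕ) = m
  · rw [if_pos hm, hm]
  · rw [if_neg hm]
    obtain ⟨i, hi⟩ : ∃ i, m i ≠ 0 := by
      by_contra hc
      push_neg at hc
      refine hm ?_
      ext j; simp [hc j]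
    have hle : Finsupp.single i 1 ≤ m := by
      rwa [Finsupp.single_le_iff, Nat.one_le_iff_ne_zero]
    have key := coeff_pderiv i p (m - Finsupp.single i 1)
    rw [h i, tsub_add_cancel_of_le hle] at key
    have hne : (((m - Finsupp.single i 1 : Fin 3 →₀ ℕ) i : ℕ) : ℂ) + 1 ≠ 0 :=
      Nat.cast_add_one_ne_zero _
    have := mul_eq_zero.mp key.symm
    tauto

lemma totalDegree_pderiv_lt {p : MvPolynomial (Fin 3) ℂ} (hp : 0 < p.totalDegree)
    (i : Fin 3) : (pderiv i p).totalDegree < p.totalDegree := by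
  rw [totalDegree]
  apply Finset.sup_lt_iff (by exact hp) |>.mpr
  intro m hm
  rw [mem_support_iff, coeff_pderiv] at hm
  have h2 : coeff (m + Finsupp.single i 1) p ≠ 0 := fun h => hm (by rw [h, mul_zero])
  have h3 := le_totalDegree (p := p) (mem_support_iff.mpr h2)
  have h4 : ((m + Finsupp.single i 1).sum fun _ e => e) = (m.sum fun _ e => e) + 1 := by
    rw [Finsupp.sum_add_index' (fun _ => rfl) (fun _ _ _ => rfl)]
    simp
  omega



/-- The lower part of a polynomial (minus its top homogeneous component) either
vanishes or has smaller total degree. -/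
lemma lower_part (p : MvPolynomial (Fin 3) ℂ) :
    p - homogeneousComponent p.totalDegree p = 0 ∨
    (p - homogeneousComponent p.totalDegree p).totalDegree < p.totalDegree := by
  set r := p - homogeneousComponent p.totalDegree p with hr
  by_cases h : r = 0
  · exact Or.inl h
  right
  have hs : ∀ d ∈ r.support, (d.sum fun _ e => e) < p.totalDegree := by
    intro d hd
    rw [mem_support_iff, hr, coeff_sub, coeff_homogeneousComponent] at hd
    by_cases hdeg : d.degree = p.totalDegree
    · simp [hdeg] at hd
    · have hdp : coeff d p ≠ 0 := by
        intro hc; simp [hc] at hd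
      have hle := le_totalDegree (p := p) (mem_support_iff.mpr hdp)
      have : d.degree = (d.sum fun _ e => e) := rfl
      omega
  have hne : r.support.Nonempty := support_nonempty.mpr h
  have hpos : 0 < p.totalDegree := by
    obtain ⟨d, hd⟩ := hne
    exact lt_of_le_of_lt (Nat.zero_le _) (hs d hd)
  rw [totalDegree]
  exact (Finset.sup_lt_iff (by exact hpos)).mpr hs

lemma totalDegree_mul_eq {p q : MvPolynomial (Fin 3) ℂ} (hp : p ≠ 0) (hq : q ≠ 0) :
    (p * q).totalDegree = p.totalDegree + q.totalDegree := by
  refine le_antisymm (totalDegree_mul p q) ?_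
  have hds : ∀ d : Fin 3 →₀ ℕ, d.degree = d.sum fun _ e => e := fun d => rfl
  let dp := p.totalDegree
  let dq := q.totalDegree
  let Pt := homogeneousComponent dp p
  let Qt := homogeneousComponent dq q
  show dp + dq ≤ _
  -- top components are nonzero
  have hPtne : Pt ≠ 0 := by
    obtain ⟨d, hd, hdeq⟩ := Finset.exists_mem_eq_sup p.support
      (support_nonempty.mpr hp) (fun m => m.sum fun _ e => e)
    intro hc
    have : coeff d Pt = coeff d p := by
      rw [coeff_homogeneousComponent, if_pos (by rw [hds]; exact hdeq.symm)]
    rw [hc] at this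
    exact (mem_support_iff.mp hd) (by simpa using this.symm)
  have hQtne : Qt ≠ 0 := by
    obtain ⟨d, hd, hdeq⟩ := Finset.exists_mem_eq_sup q.support
      (support_nonempty.mpr hq) (fun m => m.sum fun _ e => e)
    intro hc
    have : coeff d Qt = coeff d q := by
      rw [coeff_homogeneousComponent, if_pos (by rw [hds]; exact hdeq.symm)]
    rw [hc] at this
    exact (mem_support_iff.mp hd) (by simpa using this.symm)
  -- the top component of the product is the product of top components
  have hkey : homogeneousComponent (dp + dq) (p * q) = Pt * Qt := by
    have hsplit : p * q = Pt * Qt + ((p - Pt) * q + Pt * (q - Qt)) := by ring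
    rw [hsplit, map_add, map_add]
    have h1 : homogeneousComponent (dp + dq) (Pt * Qt) = Pt * Qt := by
      have hmem : Pt * Qt ∈ homogeneousSubmodule (Fin 3) ℂ (dp + dq) := by
        exact (homogeneousComponent_isHomogeneous dp p).mul
          (homogeneousComponent_isHomogeneous dq q)
      rw [homogeneousComponent_of_mem hmem, if_pos rfl]
    have h2 : homogeneousComponent (dp + dq) ((p - Pt) * q) = 0 := by
      rcases lower_part p with h | h
      · show homogeneousComponent (dp + dq) ((p - homogeneousComponent p.totalDegree p) * q) = 0
        rw [h, zero_mul, map_zero]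
      · apply homogeneousComponent_eq_zero
        calc ((p - Pt) * q).totalDegree ≤ (p - Pt).totalDegree + dq := totalDegree_mul _ _
        _ < dp + dq := Nat.add_lt_add_right h dq
    have h3 : homogeneousComponent (dp + dq) (Pt * (q - Qt)) = 0 := by
      rcases lower_part q with h | h
      · show homogeneousComponent (dp + dq) (Pt * (q - homogeneousComponent q.totalDegree q)) = 0
        rw [h, mul_zero, map_zero]
      · apply homogeneousComponent_eq_zero
        calc (Pt * (q - Qt)).totalDegree ≤ Pt.totalDegree + (q - Qt).totalDegree :=
              totalDegree_mul _ _
        _ ≤ dp + (q - Qt).totalDegree := by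
              exact Nat.add_le_add_right ((homogeneousComponent_isHomogeneous dp p).totalDegree_le) _
        _ < dp + dq := Nat.add_lt_add_left h dp
    rw [h1, h2, h3, add_zero, add_zero]
  -- conclude
  have hprodne : Pt * Qt ≠ 0 := mul_ne_zero hPtne hQtne
  obtain ⟨d, hd⟩ := support_nonempty.mpr hprodne
  have hdeg : d.degree = dp + dq := by
    by_contra hc
    exact (mem_support_iff.mp hd)
      (((homogeneousComponent_isHomogeneous dp p).mul
        (homogeneousComponent_isHomogeneous dq q)).coeff_eq_zero hc)
  have : coeff d (p * q) ≠ 0 := by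
    have := coeff_homogeneousComponent (dp + dq) (p * q) d
    rw [hkey, if_pos hdeg] at this
    rw [← this]
    exact mem_support_iff.mp hd
  have hle := le_totalDegree (p := p * q) (mem_support_iff.mpr this)
  have hdd : d.degree = (d.sum fun _ e => e) := rfl
  omega



lemma eq_C_of_totalDegree_eq_zero {p : MvPolynomial (Fin 3) ℂ}
    (h : p.totalDegree = 0) : ∃ a : ℂ, p = C a := by
  refine ⟨coeff 0 p, ?_⟩
  ext m
  rw [coeff_C]
  by_cases hm : (0 : Fin 3 →₀ ℕ) = m
  · rw [if_pos hm, hm]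
  · rw [if_neg hm]
    by_contra hc
    have := le_totalDegree (p := p) (mem_support_iff.mpr hc)
    rw [h, Nat.le_zero] at this
    simp [Finsupp.sum] at this
    exact hm (by ext i; simp [this i])

lemma totalDegree_eq_zero_of_isUnit {p : MvPolynomial (Fin 3) ℂ}
    (h : IsUnit p) : p.totalDegree = 0 := by
  obtain ⟨u, rfl⟩ := h
  have h1 : (u : MvPolynomial (Fin 3) ℂ) * ↑u⁻¹ = 1 := u.mul_inv
  have hu : (u : MvPolynomial (Fin 3) ℂ) ≠ 0 := by
    intro hc; rw [hc, zero_mul] at h1; exact one_ne_zero h1.symm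
  have hv : (↑u⁻¹ : MvPolynomial (Fin 3) ℂ) ≠ 0 := by
    intro hc; rw [hc, mul_zero] at h1; exact one_ne_zero h1.symm
  have := totalDegree_mul_eq hu hv
  rw [h1, totalDegree_one] at this
  omega

lemma prime_X (i : Fin 3) : Prime (X i : MvPolynomial (Fin 3) ℂ) := by
  rw [← UniqueFactorizationMonoid.irreducible_iff_prime]
  constructor
  · intro h
    have := totalDegree_eq_zero_of_isUnit h
    rw [totalDegree_X] at this
    exact one_ne_zero this
  · intro a b hab
    have hX : (X i : MvPolynomial (Fin 3) ℂ) ≠ 0 := X_ne_zero i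
    have ha : a ≠ 0 := by rintro rfl; rw [zero_mul] at hab; exact hX hab
    have hb : b ≠ 0 := by rintro rfl; rw [mul_zero] at hab; exact hX hab
    have hdeg : a.totalDegree + b.totalDegree = 1 := by
      rw [← totalDegree_mul_eq ha hb, ← hab, totalDegree_X]
    rcases Nat.eq_zero_or_pos a.totalDegree with h0 | h0
    · left
      obtain ⟨c, rfl⟩ := eq_C_of_totalDegree_eq_zero h0
      have hc : c ≠ 0 := fun h => ha (by rw [h, map_zero])
      exact hc.isUnit.map (C : ℂ →+* MvPolynomial (Fin 3) ℂ)
    · right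
      have : b.totalDegree = 0 := by omega
      obtain ⟨c, rfl⟩ := eq_C_of_totalDegree_eq_zero this
      have hc : c ≠ 0 := fun h => hb (by rw [h, map_zero])
      exact hc.isUnit.map (C : ℂ →+* MvPolynomial (Fin 3) ℂ)

lemma pderiv_comm (i j : Fin 3) (p : MvPolynomial (Fin 3) ℂ) :
    pderiv i (pderiv j p) = pderiv j (pderiv i p) := by
  induction p using MvPolynomial.induction_on with
  | C a => simp
  | add p q hp hq => simp [hp, hq]
  | mul_X p n hp =>
    have hXc : ∀ k l : Fin 3, pderiv k (pderiv l (X n : MvPolynomial (Fin 3) ℂ)) = 0 := by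
      intro k l
      by_cases h : n = l
      · subst h; rw [pderiv_X_self, pderiv_one]
      · rw [pderiv_X_of_ne h, map_zero]
    simp only [pderiv_mul, map_add, pderiv_mul, hXc, mul_zero, add_zero, hp]
    ring



noncomputable def SQ : MvPolynomial (Fin 3) ℂ := X 0 ^ 2 + X 1 ^ 2 + X 2 ^ 2

lemma pderiv_SQ (i : Fin 3) : pderiv i SQ = 2 * X i := by
  fin_cases i <;>
    simp [SQ, pderiv_X_self, pderiv_X_of_ne, pderiv_pow] <;> ring

lemma aeval_C' (a : ℂ) : Polynomial.aeval SQ (Polynomial.C a) = (C a : MvPolynomial (Fin 3) ℂ) := by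
  simp [algebraMap_eq]

lemma pderiv_aeval_SQ (P : Polynomial ℂ) (i : Fin 3) :
    pderiv i (Polynomial.aeval SQ P) =
      Polynomial.aeval SQ (Polynomial.derivative P) * (2 * X i) := by
  induction P using Polynomial.induction_on with
  | C a => simp [aeval_C']
  | add p q hp hq => simp [hp, hq]; ring
  | monomial n a h =>
    simp only [map_mul, Polynomial.aeval_C, Polynomial.aeval_X_pow, Polynomial.derivative_C_mul,
      Polynomial.derivative_X_pow, map_mul, map_natCast, map_pow, Polynomial.aeval_X]
    rw [algebraMap_eq, pderiv_C_mul, pderiv_pow, pderiv_SQ]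
    simp only [Nat.add_sub_cancel]
    push_cast
    ring

lemma exists_antideriv (Q : Polynomial ℂ) : ∃ P : Polynomial ℂ, Polynomial.derivative P = Q := by
  induction Q using Polynomial.induction_on with
  | C a =>
    exact ⟨Polynomial.C a * Polynomial.X, by simp⟩
  | add p q hp hq =>
    obtain ⟨P1, h1⟩ := hp; obtain ⟨P2, h2⟩ := hq
    exact ⟨P1 + P2, by simp [h1, h2]⟩
  | monomial n a _ =>
    refine ⟨Polynomial.C (a / (n + 2)) * Polynomial.X ^ (n + 2), ?_⟩
    rw [Polynomial.derivative_C_mul_X_pow]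
    have h2 : ((n : ℂ) + 2) ≠ 0 := by
      intro h
      have := Nat.cast_add_one_ne_zero (R := ℂ) (n + 1)
      push_cast at this
      apply this; linear_combination h
    have hnn : n + 2 - 1 = n + 1 := by omega
    rw [hnn]
    congr 1
    rw [div_mul_eq_mul_div]
    push_cast
    field_simp



lemma eq_aeval_SQ_aux (n : ℕ) : ∀ p : MvPolynomial (Fin 3) ℂ, p.totalDegree ≤ n →
    (∀ i j : Fin 3, pderiv i p * X j = pderiv j p * X i) →
    ∃ P : Polynomial ℂ, p = Polynomial.aeval SQ P := by
  induction n with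
  | zero =>
    intro p hdeg _
    obtain ⟨a, rfl⟩ := eq_C_of_totalDegree_eq_zero (Nat.le_zero.mp hdeg)
    exact ⟨Polynomial.C a, (aeval_C' a).symm⟩
  | succ n IH =>
    intro p hdeg hrel
    by_cases h0 : p.totalDegree = 0
    · obtain ⟨a, rfl⟩ := eq_C_of_totalDegree_eq_zero h0
      exact ⟨Polynomial.C a, (aeval_C' a).symm⟩
    -- there is a nonzero partial derivative
    obtain ⟨i₀, hi₀⟩ : ∃ i, pderiv i p ≠ 0 := by
      by_contra hc
      push_neg at hc
      obtain ⟨a, rfl⟩ := eq_C_of_pderiv_eq_zero hc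
      exact h0 (totalDegree_C a)
    -- extract g with pderiv i p = X i * g
    have hdvd : (X 0 : MvPolynomial (Fin 3) ℂ) ∣ pderiv 0 p := by
      have h01 := hrel 0 1
      have : (X 0 : MvPolynomial (Fin 3) ℂ) ∣ pderiv 0 p * X 1 :=
        ⟨pderiv 1 p, by rw [h01]; ring⟩
      rcases (prime_X 0).2.2 _ _ this with h | h
      · exact h
      · exact absurd (X_dvd_X.mp h) (by decide)
    obtain ⟨g, hg0⟩ := hdvd
    have hgi : ∀ i, pderiv i p = X i * g := by
      intro i
      fin_cases i
      · exact hg0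
      · apply mul_left_cancel₀ (X_ne_zero (R := ℂ) (σ := Fin 3) 0)
        have := hrel 1 0
        rw [hg0] at this
        calc (X 0 : MvPolynomial (Fin 3) ℂ) * pderiv 1 p = pderiv 1 p * X 0 := by ring
        _ = X 0 * g * X 1 := this
        _ = X 0 * (X 1 * g) := by ring
      · apply mul_left_cancel₀ (X_ne_zero (R := ℂ) (σ := Fin 3) 0)
        have := hrel 2 0
        rw [hg0] at this
        calc (X 0 : MvPolynomial (Fin 3) ℂ) * pderiv 2 p = pderiv 2 p * X 0 := by ring
        _ = X 0 * g * X 2 := this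
        _ = X 0 * (X 2 * g) := by ring
    -- g satisfies the same relations
    have hgrel : ∀ i j : Fin 3, pderiv i g * X j = pderiv j g * X i := by
      intro i j
      by_cases hij : i = j
      · rw [hij]
      · have hcomm := pderiv_comm j i p
        rw [hgi i, hgi j, pderiv_mul, pderiv_mul] at hcomm
        rw [pderiv_X_of_ne (Ne.symm hij), pderiv_X_of_ne hij] at hcomm
        simp only [zero_mul, zero_add] at hcomm
        linear_combination -hcomm
    -- g is nonzero and of smaller degree
    have hgne : g ≠ 0 := by
      intro hc
      apply hi₀
      rw [hgi i₀, hc, mul_zero]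
    have hdegg : g.totalDegree ≤ n := by
      have h1 : (pderiv i₀ p).totalDegree < p.totalDegree :=
        totalDegree_pderiv_lt (Nat.pos_of_ne_zero h0) i₀
      rw [hgi i₀, totalDegree_mul_eq (X_ne_zero i₀) hgne, totalDegree_X] at h1
      omega
    obtain ⟨Q, hQ⟩ := IH g hdegg hgrel
    obtain ⟨P₀, hP₀⟩ := exists_antideriv (Polynomial.C (1/2) * Q)
    have hpd : ∀ i, pderiv i (p - Polynomial.aeval SQ P₀) = 0 := by
      intro i
      rw [map_sub, pderiv_aeval_SQ, hP₀, hgi i, hQ]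
      rw [map_mul]
      rw [Polynomial.aeval_C]
      rw [algebraMap_eq]
      have hC2 : (C (2:ℂ) : MvPolynomial (Fin 3) ℂ) = 2 := by
        exact map_ofNat C 2
      have h2 : (C ((1:ℂ)/2) : MvPolynomial (Fin 3) ℂ) * C 2 = 1 := by
        rw [← map_mul]; norm_num
      rw [← hC2]
      linear_combination (-(X i) * Polynomial.aeval SQ Q) * h2
    obtain ⟨a, ha⟩ := eq_C_of_pderiv_eq_zero hpd
    refine ⟨P₀ + Polynomial.C a, ?_⟩
    rw [map_add, aeval_C']
    linear_combination ha

lemma eq_aeval_SQ (p : MvPolynomial (Fin 3) ℂ)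
    (hrel : ∀ i j : Fin 3, pderiv i p * X j = pderiv j p * X i) :
    ∃ P : Polynomial ℂ, p = Polynomial.aeval SQ P :=
  eq_aeval_SQ_aux p.totalDegree p le_rfl hrel



lemma not_irreducible_C (a : ℂ) : ¬ Irreducible (C a : MvPolynomial (Fin 3) ℂ) := by
  intro h
  by_cases ha : a = 0
  · rw [ha, map_zero] at h
    exact h.ne_zero rfl
  · exact h.not_isUnit ((isUnit_iff_ne_zero.mpr ha).map (C : ℂ →+* MvPolynomial (Fin 3) ℂ))

theorem main
    (f : MvPolynomial (Fin 3) ℂ) (hf : Irreducible f)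
    (hpar : ∀ y : Fin 3 → ℂ, eval y f = 0 →
      (∃ i : Fin 3, eval y (pderiv i f) ≠ 0) →
      ∀ i j : Fin 3, eval y (pderiv i f) * y j - eval y (pderiv j f) * y i = 0)
    (hiso : ∃ y : Fin 3 → ℂ, eval y f = 0 ∧
      (eval y (pderiv 0 f)) ^ 2 + (eval y (pderiv 1 f)) ^ 2 + (eval y (pderiv 2 f)) ^ 2 ≠ 0) :
    ∃ c : ℂ, c ≠ 0 ∧ ∀ y : Fin 3 → ℂ, eval y f = 0 →
      y 0 ^ 2 + y 1 ^ 2 + y 2 ^ 2 = c := by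
  have hfne : f ≠ 0 := hf.ne_zero
  have hprime : Prime f := UniqueFactorizationMonoid.irreducible_iff_prime.mp hf
  have hdegf : f.totalDegree ≠ 0 := by
    intro h
    obtain ⟨a, rfl⟩ := eq_C_of_totalDegree_eq_zero h
    exact not_irreducible_C a hf
  -- Nullstellensatz: a polynomial vanishing on V(f) is divisible by f
  have hdvd_of_vanishing : ∀ g : MvPolynomial (Fin 3) ℂ,
      (∀ y : Fin 3 → ℂ, eval y f = 0 → eval y g = 0) → f ∣ g := by
    intro g hv
    have hIP : (Ideal.span {f}).IsPrime := (Ideal.span_singleton_prime hfne).mpr hprime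
    have hmem : g ∈ vanishingIdeal ℂ (zeroLocus ℂ (Ideal.span {f})) := by
      rw [mem_vanishingIdeal_iff]
      intro x hx
      have := hx f (Ideal.subset_span rfl)
      exact hv x this
    rw [vanishingIdeal_zeroLocus_eq_radical, hIP.radical] at hmem
    exact Ideal.mem_span_singleton.mp hmem
  -- the cross-product polynomials vanish on V(f)
  have hvanish : ∀ i j : Fin 3, ∀ y : Fin 3 → ℂ, eval y f = 0 →
      eval y (pderiv i f * X j - pderiv j f * X i) = 0 := by
    intro i j y hy
    by_cases hreg : ∃ k : Fin 3, eval y (pderiv k f) ≠ 0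
    · have := hpar y hy hreg i j
      simpa using this
    · push_neg at hreg
      simp [hreg i, hreg j]
  -- f divides each cross product, and the quotient is a constant
  have hconst : ∀ i j : Fin 3, ∃ a : ℂ,
      pderiv i f * X j - pderiv j f * X i = C a * f := by
    intro i j
    obtain ⟨q, hq⟩ := hdvd_of_vanishing _ (hvanish i j)
    rcases eq_or_ne q 0 with rfl | hqne
    · exact ⟨0, by rw [hq, map_zero, mul_zero, zero_mul]⟩
    -- degree bound
    have hbd : ∀ k l : Fin 3, (pderiv k f * X l).totalDegree ≤ f.totalDegree := by
      intro k l
      rcases eq_or_ne (pderiv k f) 0 with h | h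
      · rw [h, zero_mul, totalDegree_zero]; exact Nat.zero_le _
      · rw [totalDegree_mul_eq h (X_ne_zero l), totalDegree_X]
        have := totalDegree_pderiv_lt (Nat.pos_of_ne_zero hdegf) k
        omega
    have hgd : (pderiv i f * X j - pderiv j f * X i).totalDegree ≤ f.totalDegree := by
      rw [sub_eq_add_neg]
      refine le_trans (totalDegree_add _ _) ?_
      rw [totalDegree_neg]
      exact max_le (hbd i j) (hbd j i)
    rw [hq, totalDegree_mul_eq hfne hqne] at hgd
    have hq0 : q.totalDegree = 0 := by omega
    obtain ⟨a, rfl⟩ := eq_C_of_totalDegree_eq_zero hq0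
    exact ⟨a, by rw [hq]; ring⟩
  obtain ⟨a01, h01⟩ := hconst 0 1
  obtain ⟨a12, h12⟩ := hconst 1 2
  obtain ⟨a20, h20⟩ := hconst 2 0
  -- the constants vanish
  have hL : (C a12 * X 0 + C a20 * X 1 + C a01 * X 2) * f = 0 := by
    have : X 2 * (pderiv 0 f * X 1 - pderiv 1 f * X 0)
        + X 0 * (pderiv 1 f * X 2 - pderiv 2 f * X 1)
        + X 1 * (pderiv 2 f * X 0 - pderiv 0 f * X 2) = 0 := by ring
    rw [h01, h12, h20] at this
    linear_combination this
  have hLzero : (C a12 * X 0 + C a20 * X 1 + C a01 * X 2 : MvPolynomial (Fin 3) ℂ) = 0 := by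
    rcases mul_eq_zero.mp hL with h | h
    · exact h
    · exact absurd h hfne
  have ha12 : a12 = 0 := by
    have := congrArg (eval ![1, 0, 0]) hLzero
    simpa using this
  have ha20 : a20 = 0 := by
    have := congrArg (eval ![0, 1, 0]) hLzero
    simpa using this
  have ha01 : a01 = 0 := by
    have := congrArg (eval ![0, 0, 1]) hLzero
    simpa using this
  rw [ha01, map_zero, zero_mul] at h01
  rw [ha12, map_zero, zero_mul] at h12
  rw [ha20, map_zero, zero_mul] at h20
  have hrel : ∀ i j : Fin 3, pderiv i f * X j = pderiv j f * X i := by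
    intro i j
    fin_cases i <;> fin_cases j <;>
      simp only [Fin.zero_eta, Fin.mk_one, Fin.reduceFinMk] <;>
      first
        | with_reducible rfl
        | linear_combination h01
        | linear_combination -h01
        | linear_combination h12
        | linear_combination -h12
        | linear_combination h20
        | linear_combination -h20
  -- f is a polynomial in SQ
  obtain ⟨P, hP⟩ := eq_aeval_SQ f hrel
  have hPnd : P.natDegree ≠ 0 := by
    intro h
    obtain ⟨a, ha⟩ := Polynomial.natDegree_eq_zero.mp h
    rw [← ha, aeval_C'] at hP
    exact not_irreducible_C a (hP ▸ hf)
  have hPne : P ≠ 0 := fun h => hPnd (by rw [h]; simp)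
  obtain ⟨c, hc⟩ := IsAlgClosed.exists_root P (by
    intro h
    exact hPnd (Polynomial.natDegree_eq_zero_iff_degree_le_zero.mpr h.le))
  obtain ⟨R, hR⟩ := Polynomial.dvd_iff_isRoot.mpr hc
  have hfactor : f = (SQ - C c) * Polynomial.aeval SQ R := by
    rw [hP, hR, map_mul, map_sub, Polynomial.aeval_X, aeval_C']
  -- SQ - C c is not a unit
  obtain ⟨z, hz⟩ := IsAlgClosed.exists_pow_nat_eq (k := ℂ) c zero_lt_two
  have hnotunit : ¬ IsUnit (SQ - C c : MvPolynomial (Fin 3) ℂ) := by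
    intro h
    have h2 := h.map (eval ![z, 0, 0])
    have : eval ![z, 0, 0] (SQ - C c) = 0 := by
      simp [SQ, hz]
    rw [this] at h2
    simpa using h2
  have hu : IsUnit (Polynomial.aeval SQ R : MvPolynomial (Fin 3) ℂ) := by
    rcases hf.isUnit_or_isUnit hfactor with h | h
    · exact absurd h hnotunit
    · exact h
  obtain ⟨α, hα⟩ := eq_C_of_totalDegree_eq_zero (totalDegree_eq_zero_of_isUnit hu)
  rw [hα] at hfactor
  have hαne : α ≠ 0 := by
    rintro rfl
    rw [map_zero, mul_zero] at hfactor
    exact hfne hfactor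
  -- evaluation of f
  have heval : ∀ y : Fin 3 → ℂ, eval y f = (y 0 ^ 2 + y 1 ^ 2 + y 2 ^ 2 - c) * α := by
    intro y
    rw [hfactor]
    simp [SQ]
  -- the sphere equation
  have hsphere : ∀ y : Fin 3 → ℂ, eval y f = 0 → y 0 ^ 2 + y 1 ^ 2 + y 2 ^ 2 = c := by
    intro y hy
    rw [heval y] at hy
    rcases mul_eq_zero.mp hy with h | h
    · exact sub_eq_zero.mp h
    · exact absurd h hαne
  -- c is nonzero, using the non-isotropy witness
  refine ⟨c, ?_, hsphere⟩
  obtain ⟨y, hy0, hyiso⟩ := hiso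
  have hSy := hsphere y hy0
  have hpd : ∀ i : Fin 3, eval y (pderiv i f) = 2 * y i * α := by
    intro i
    rw [hfactor, pderiv_mul, pderiv_C, mul_zero, add_zero, map_sub, pderiv_C, sub_zero,
      pderiv_SQ]
    simp
    try ring
  intro hczero
  apply hyiso
  rw [hpd 0, hpd 1, hpd 2]
  have : (2 * y 0 * α) ^ 2 + (2 * y 1 * α) ^ 2 + (2 * y 2 * α) ^ 2
      = 4 * α ^ 2 * (y 0 ^ 2 + y 1 ^ 2 + y 2 ^ 2) := by ring
  rw [this, hSy, hczero, mul_zero]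

end Sphere15

/-- Let `Σ ⊂ ℂ³` be the irreducible surface defined by `f`, and
suppose that at every regular point `y` of `Σ` the gradient `∇f(y)` is parallel
to `y`.  If `Σ` is not normal-isotropic (the hodograph `h = f₁²+f₂²+f₃²` does not
vanish identically on `Σ`), then `Σ` is a sphere centered at the origin: there is
`c ∈ ℂ^×` with `y₁²+y₂²+y₃² = c` on `Σ`. -/
theorem surface_with_normals_through_origin_is_sphere
    (f : MvPolynomial (Fin 3) ℂ) (hf : Irreducible f)
    (hpar : ∀ y : Fin 3 → ℂ, eval y f = 0 →
      (∃ i : Fin 3, eval y (pderiv i f) ≠ 0) →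
      ∀ i j : Fin 3, eval y (pderiv i f) * y j - eval y (pderiv j f) * y i = 0)
    (hiso : ∃ y : Fin 3 → ℂ, eval y f = 0 ∧
      (eval y (pderiv 0 f)) ^ 2 + (eval y (pderiv 1 f)) ^ 2 + (eval y (pderiv 2 f)) ^ 2 ≠ 0) :
    ∃ c : ℂ, c ≠ 0 ∧ ∀ y : Fin 3 → ℂ, eval y f = 0 →
      y 0 ^ 2 + y 1 ^ 2 + y 2 ^ 2 = c := by
  exact Sphere15.main f hf hpar hiso
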